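/- For a bounded linear operator X on a complex Hilbert space and any real number θ, the numerical radius of the block operator matrix [[0, X],[e^{iθ}X, 0]] on H ⊕ H equals w(X). -/

import Mathlib

open scoped InnerProductSpace
open ContinuousLinearMap Metric

/-- The numerical radius of a bounded operator on a complex Hilbert space. -/
noncomputable def numRadius {H : Type*} [NormedAddCommGroup H] [InnerProductSpace ℂ H]
    (T : H →L[ℂ] H) : ℝ :=
  sSup {r : ℝ | ∃ x : H, ‖x‖ = 1 ∧ r = ‖(inner ℂ (T x) x : ℂ)‖}

/-- The block operator `[[0, X], [Y, 0]]` acting on `H ⊕ H` (with the `ℓ²` Hilbert space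
structure) by `(x, y) ↦ (X y, Y x)`. -/
noncomputable def blockOp {H : Type*} [NormedAddCommGroup H] [InnerProductSpace ℂ H]
    (X Y : H →L[ℂ] H) : WithLp 2 (H × H) →L[ℂ] WithLp 2 (H × H) :=
  ((WithLp.prodContinuousLinearEquiv 2 ℂ H H).symm.toContinuousLinearMap) ∘L
    ((X ∘L ContinuousLinearMap.snd ℂ H H).prod (Y ∘L ContinuousLinearMap.fst ℂ H H)) ∘L
    ((WithLp.prodContinuousLinearEquiv 2 ℂ H H).toContinuousLinearMap)

/-- `A` is a `G₁` operator: `‖(z - A)⁻¹‖ = 1 / dist (z, σ(A))` for all `z ∉ σ(A)`. -/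
def IsG1 {H : Type*} [NormedAddCommGroup H] [InnerProductSpace ℂ H] [CompleteSpace H]
    (A : H →L[ℂ] H) : Prop :=
  ∀ z : ℂ, z ∉ spectrum ℂ A →
    ‖Ring.inverse (algebraMap ℂ (H →L[ℂ] H) z - A)‖ = 1 / Metric.infDist z (spectrum ℂ A)

/-- The distance between two subsets of `ℂ`. -/
noncomputable def setDist (s t : Set ℂ) : ℝ :=
  sInf {d : ℝ | ∃ z ∈ s, ∃ w ∈ t, d = dist z w}

/-- The Riesz–Dunford functional calculus `f(A)` for `f` analytic on the unit disk and
`σ(A) ⊂ 𝔻`, realized through the Taylor expansion of `f` at `0`. -/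
noncomputable def dunford {H : Type*} [NormedAddCommGroup H] [InnerProductSpace ℂ H]
    [CompleteSpace H] (f : ℂ → ℂ) (A : H →L[ℂ] H) : H →L[ℂ] H :=
  ∑' n : ℕ, (iteratedDeriv n f 0 / n.factorial) • A ^ n

/-- The modulus `|C| = (C*C)^{1/2}` of a bounded operator. -/
noncomputable def opAbs {H : Type*} [NormedAddCommGroup H] [InnerProductSpace ℂ H]
    [CompleteSpace H] (C : H →L[ℂ] H) : H →L[ℂ] H :=
  CFC.sqrt (ContinuousLinearMap.adjoint C * C)

section Aux
variable {H : Type*} [NormedAddCommGroup H] [InnerProductSpace ℂ H]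

lemma numRadius_nonneg (T : H →L[ℂ] H) : 0 ≤ numRadius T :=
  Real.sSup_nonneg (by rintro r ⟨x, hx, rfl⟩; positivity)

lemma numRadius_bddAbove (T : H →L[ℂ] H) :
    BddAbove {r : ℝ | ∃ x : H, ‖x‖ = 1 ∧ r = ‖(inner ℂ (T x) x : ℂ)‖} := by
  refine ⟨‖T‖, ?_⟩
  rintro r ⟨x, hx, rfl⟩
  calc ‖(inner ℂ (T x) x : ℂ)‖ ≤ ‖T x‖ * ‖x‖ := norm_inner_le_norm _ _
    _ ≤ (‖T‖ * ‖x‖) * ‖x‖ := by gcongr; exact T.le_opNorm x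
    _ = ‖T‖ := by rw [hx]; ring

lemma inner_le_numRadius (T : H →L[ℂ] H) {x : H} (hx : ‖x‖ = 1) :
    ‖(inner ℂ (T x) x : ℂ)‖ ≤ numRadius T :=
  le_csSup (numRadius_bddAbove T) ⟨x, hx, rfl⟩

lemma inner_le_numRadius_sq (T : H →L[ℂ] H) (u : H) :
    ‖(inner ℂ (T u) u : ℂ)‖ ≤ numRadius T * ‖u‖ ^ 2 := by
  rcases eq_or_ne u 0 with rfl | hu
  · simp
  · have hn : (0:ℝ) < ‖u‖ := norm_pos_iff.mpr hu
    set c : ℂ := ((‖u‖ : ℝ) : ℂ)⁻¹ with hc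
    have hx : ‖c • u‖ = 1 := by
      rw [norm_smul, hc, norm_inv, Complex.norm_real, norm_norm]
      field_simp
    have h := inner_le_numRadius T hx
    have hcc : (inner ℂ (T (c • u)) (c • u) : ℂ) = c * c * inner ℂ (T u) u := by
      rw [map_smul, inner_smul_left, inner_smul_right, hc, map_inv₀, Complex.conj_ofReal]
      ring
    rw [hcc, norm_mul, norm_mul, hc, norm_inv, Complex.norm_real, norm_norm] at h
    have h2 := mul_le_mul_of_nonneg_right h (sq_nonneg ‖u‖)
    have h3 : ‖u‖⁻¹ * ‖u‖⁻¹ * ‖(inner ℂ (T u) u : ℂ)‖ * ‖u‖ ^ 2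
        = ‖(inner ℂ (T u) u : ℂ)‖ := by
      field_simp
    linarith

lemma pol_bound (X : H →L[ℂ] H) (u v : H) :
    ‖(inner ℂ (X v) u + inner ℂ (X u) v : ℂ)‖ ≤ numRadius X * (‖u‖ ^ 2 + ‖v‖ ^ 2) := by
  have h1 := inner_le_numRadius_sq X (u + v)
  have h2 := inner_le_numRadius_sq X (u - v)
  have hid : (inner ℂ (X v) u + inner ℂ (X u) v : ℂ)
      = (2:ℂ)⁻¹ * ((inner ℂ (X (u+v)) (u+v) : ℂ) - inner ℂ (X (u-v)) (u-v)) := by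
    simp only [map_add, map_sub, inner_add_left, inner_add_right, inner_sub_left,
      inner_sub_right]
    ring
  have hpar : ‖u + v‖ ^ 2 + ‖u - v‖ ^ 2 = 2 * (‖u‖ ^ 2 + ‖v‖ ^ 2) := by
    have := parallelogram_law_with_norm ℂ u v
    ring_nf
    ring_nf at this
    linarith
  have hle : ‖(inner ℂ (X v) u + inner ℂ (X u) v : ℂ)‖
      ≤ (1/2) * (‖(inner ℂ (X (u+v)) (u+v) : ℂ)‖ + ‖(inner ℂ (X (u-v)) (u-v) : ℂ)‖) := by
    rw [hid, norm_mul]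
    have hn : ‖((2:ℂ)⁻¹)‖ = 1/2 := by norm_num
    rw [hn]
    have := norm_sub_le (inner ℂ (X (u+v)) (u+v) : ℂ) (inner ℂ (X (u-v)) (u-v) : ℂ)
    nlinarith
  nlinarith [numRadius_nonneg X]

end Aux

theorem stmt6 {H : Type*} [NormedAddCommGroup H] [InnerProductSpace ℂ H] [CompleteSpace H] (X : H →L[ℂ] H) (θ : ℝ) :
    numRadius (blockOp X (Complex.exp (θ * Complex.I) • X)) = numRadius X := by
  set e : ℂ := Complex.exp (θ * Complex.I) with he
  set a : ℂ := Complex.exp (((θ/2 : ℝ) : ℂ) * Complex.I) with ha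
  set b : ℂ := starRingEnd ℂ a with hb
  have ha2 : a * a = e := by
    rw [ha, he, ← Complex.exp_add]
    congr 1
    push_cast
    ring
  have habs : ‖a‖ = 1 := Complex.norm_exp_ofReal_mul_I _
  have hbabs : ‖b‖ = 1 := by rw [hb, RCLike.norm_conj, habs]
  have hba : a * b = 1 := by
    rw [hb, Complex.mul_conj, Complex.normSq_eq_norm_sq]
    rw [show ‖a‖ = 1 from habs]
    norm_num
  have hce : starRingEnd ℂ e = b * b := by rw [← ha2, map_mul, ← hb]
  have hcb : starRingEnd ℂ b = a := by rw [hb, Complex.conj_conj]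
  set T := blockOp X (e • X) with hT
  apply le_antisymm
  · apply Real.sSup_le _ (numRadius_nonneg X)
    rintro r ⟨z, hz, rfl⟩
    have h0 : (inner ℂ (T z) z : ℂ)
        = inner ℂ (X z.snd) z.fst + inner ℂ ((e • X) z.fst) z.snd := rfl
    have hinner : (inner ℂ (T z) z : ℂ)
        = b * ((inner ℂ (X (b • z.snd)) z.fst : ℂ) + inner ℂ (X z.fst) (b • z.snd)) := by
      rw [h0]
      simp only [ContinuousLinearMap.smul_apply, map_smul, inner_smul_left, inner_smul_right,
        hce, hcb]
      linear_combination -(inner ℂ (X z.snd) z.fst : ℂ) * hba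
    have hnz : ‖z.fst‖ ^ 2 + ‖z.snd‖ ^ 2 = 1 := by
      have := WithLp.prod_norm_sq_eq_of_L2 z
      rw [hz] at this
      linarith
    have hb' : ‖(b • z.snd : H)‖ = ‖z.snd‖ := by rw [norm_smul, hbabs, one_mul]
    calc ‖(inner ℂ (T z) z : ℂ)‖
        = ‖(inner ℂ (X (b • z.snd)) z.fst : ℂ) + inner ℂ (X z.fst) (b • z.snd)‖ := by
          rw [hinner, norm_mul, hbabs, one_mul]
      _ ≤ numRadius X * (‖z.fst‖ ^ 2 + ‖(b • z.snd : H)‖ ^ 2) := pol_bound X _ _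
      _ = numRadius X := by rw [hb', hnz, mul_one]
  · apply Real.sSup_le _ (numRadius_nonneg T)
    rintro r ⟨x, hx, rfl⟩
    set w : WithLp 2 (H × H) := (WithLp.equiv 2 (H × H)).symm (b • x, x) with hw
    set c : ℂ := ((Real.sqrt 2 : ℝ) : ℂ)⁻¹ with hc
    set z : WithLp 2 (H × H) := c • w with hzdef
    have hs2 : (0:ℝ) < Real.sqrt 2 := Real.sqrt_pos.mpr (by norm_num)
    have hw2 : ‖w‖ ^ 2 = 2 := by
      rw [WithLp.prod_norm_sq_eq_of_L2]
      have h1 : ‖w.fst‖ = 1 := by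
        show ‖b • x‖ = 1
        rw [norm_smul, hbabs, hx, one_mul]
      have h2 : ‖w.snd‖ = 1 := hx
      rw [h1, h2]; norm_num
    have hwn : ‖w‖ = Real.sqrt 2 := by
      rw [← Real.sqrt_sq (norm_nonneg w), hw2]
    have hcn : ‖c‖ = (Real.sqrt 2)⁻¹ := by
      rw [hc, norm_inv, Complex.norm_real, Real.norm_eq_abs, abs_of_pos hs2]
    have hz : ‖z‖ = 1 := by
      rw [hzdef, norm_smul, hcn, hwn, inv_mul_cancel₀ (ne_of_gt hs2)]
    have heb : e * b = a := by linear_combination a * hba - b * ha2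
    have hTw : (inner ℂ (T w) w : ℂ) = 2 * (b * inner ℂ (X x) x) := by
      have h0 : (inner ℂ (T w) w : ℂ)
          = inner ℂ (X w.snd) w.fst + inner ℂ ((e • X) w.fst) w.snd := rfl
      rw [h0]
      show (inner ℂ (X x) (b • x) : ℂ) + inner ℂ ((e • X) (b • x)) x = 2 * (b * inner ℂ (X x) x)
      simp only [ContinuousLinearMap.smul_apply, map_smul, smul_smul, inner_smul_left,
        inner_smul_right, map_mul, hcb, hce]
      linear_combination (inner ℂ (X x) x : ℂ) * b * hba
    have hcc : starRingEnd ℂ c * c = (2:ℂ)⁻¹ := by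
      rw [hc, map_inv₀, Complex.conj_ofReal, ← mul_inv, ← Complex.ofReal_mul,
        Real.mul_self_sqrt (by norm_num)]
      norm_num
    have hTz : (inner ℂ (T z) z : ℂ) = b * inner ℂ (X x) x := by
      have h1 : (inner ℂ (T z) z : ℂ) = starRingEnd ℂ c * c * inner ℂ (T w) w := by
        rw [hzdef, map_smul, inner_smul_left, inner_smul_right]
        ring
      rw [h1, hcc, hTw]
      have h2 : ((2:ℂ)⁻¹ * 2 : ℂ) = 1 := by norm_num
      linear_combination (b * (inner ℂ (X x) x : ℂ)) * h2
    have hfin : ‖(inner ℂ (X x) x : ℂ)‖ = ‖(inner ℂ (T z) z : ℂ)‖ := by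
      rw [hTz, norm_mul, hbabs, one_mul]
    rw [hfin]
    exact inner_le_numRadius T hz
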